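/- Let (X_n)_{n≥1} be i.i.d. real random variables, let (X'_n) be an independent copy of the sequence (X_n), and set X*_n := X_n − X'_n. Let L_a, L'_a and L*_a denote the last deviation times associated with the Cesàro means of (X_n), (X'_n) and (X*_n) respectively. Then for every a > 0 and every n ≥ 1, {L*_{2a} ≥ n} ⊆ {L_a ≥ n} ∪ {L'_a ≥ n}, so P[L*_{2a} ≥ n] ≤ 2·P[L_a ≥ n]; consequently, for every nonnegative non-decreasing function G one has E[G(L*_{2a})] ≤ 2·E[G(L_a)] (both sides possibly infinite). -/

import Mathlib

open MeasureTheory ProbabilityTheory ENNReal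

/-- Partial sums `S_n = X_1 + ⋯ + X_n` (here `X i` for `i < n`). -/
noncomputable def partialSum {Ω : Type*} (X : ℕ → Ω → ℝ) (n : ℕ) (ω : Ω) : ℝ :=
  ∑ i ∈ Finset.range n, X i ω

/-- The last deviation time `L_a = sup({0} ∪ {n ≥ 1 : |S_n/n| ≥ a}) ∈ ℕ ∪ {∞}`. -/
noncomputable def lastDev {Ω : Type*} (X : ℕ → Ω → ℝ) (a : ℝ) (ω : Ω) : ℕ∞ :=
  ⨆ n ∈ {n : ℕ | 1 ≤ n ∧ a ≤ |partialSum X n ω / n|}, (n : ℕ∞)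

/-- Evaluation of `G` at an extended natural number, with `G(∞) = ∞`. -/
noncomputable def evalG (G : ℝ → ℝ) : ℕ∞ → ℝ≥0∞
  | ⊤ => ⊤
  | (n : ℕ) => ENNReal.ofReal (G n)

/-- A positive function on `[0,∞)` is moderate if it is non-decreasing, tends to `+∞`,
and `G(2t) ≤ c·G(t)`. -/
def Moderate (G : ℝ → ℝ) : Prop :=
  (∀ t ≥ 0, 0 < G t) ∧ MonotoneOn G (Set.Ici 0) ∧
    Filter.Tendsto G Filter.atTop Filter.atTop ∧
    ∃ c : ℝ, ∀ t ≥ 0, G (2 * t) ≤ c * G t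

lemma evalG_top (G : ℝ → ℝ) : evalG G ⊤ = ⊤ := rfl
lemma evalG_coe (G : ℝ → ℝ) (n : ℕ) : evalG G (n : ℕ∞) = ENNReal.ofReal (G n) := rfl

lemma enat_top_iff (x : ℕ∞) : x = ⊤ ↔ ∀ k : ℕ, (k : ℕ∞) ≤ x := by
  constructor
  · rintro rfl k; exact le_top
  · intro h
    cases x with
    | top => rfl
    | coe m =>
      have := h (m + 1)
      have h2 : m + 1 ≤ m := by exact_mod_cast this
      omega

lemma enat_eq_iff (x : ℕ∞) (k : ℕ) :
    x = (k : ℕ∞) ↔ ((k : ℕ∞) ≤ x ∧ ¬ (((k + 1 : ℕ)) : ℕ∞) ≤ x) := by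
  cases x with
  | top => simp [enat_top_iff]
  | coe m =>
    constructor
    · intro h
      have hm : m = k := by exact_mod_cast h
      subst hm
      refine ⟨le_rfl, fun h2 => ?_⟩
      have : m + 1 ≤ m := by exact_mod_cast h2
      omega
    · rintro ⟨h1, h2⟩
      have h1' : k ≤ m := by exact_mod_cast h1
      have h2' : ¬ (k + 1 ≤ m) := fun h => h2 (by exact_mod_cast h)
      have : m = k := by omega
      exact_mod_cast this

lemma aux_le_lastDev {Ω : Type*} (X : ℕ → Ω → ℝ) (a : ℝ) (ω : Ω) {n : ℕ} (hn : 1 ≤ n) :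
    (n : ℕ∞) ≤ lastDev X a ω ↔ ∃ m, n ≤ m ∧ a ≤ |partialSum X m ω / m| := by
  constructor
  · intro h
    by_contra hc
    push_neg at hc
    have hub : lastDev X a ω ≤ ((n - 1 : ℕ) : ℕ∞) := by
      refine iSup₂_le fun m hm => ?_
      have hm' : m < n := by
        by_contra hmn
        exact absurd hm.2 (not_le.2 (hc m (not_lt.1 hmn)))
      exact_mod_cast Nat.le_sub_one_of_lt hm'
    have := le_trans h hub
    have : n ≤ n - 1 := by exact_mod_cast this
    omega
  · rintro ⟨m, hnm, hm⟩
    have h1 : (m : ℕ∞) ≤ lastDev X a ω :=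
      le_iSup₂ (f := fun (m : ℕ) (_ : m ∈ {n : ℕ | 1 ≤ n ∧ a ≤ |partialSum X n ω / n|}) => (m : ℕ∞))
        m ⟨le_trans hn hnm, hm⟩
    exact le_trans (by exact_mod_cast hnm) h1

lemma aux_evalG_mono (G : ℝ → ℝ) (hG : MonotoneOn G (Set.Ici 0)) : Monotone (evalG G) := by
  intro x y hxy
  cases y with
  | top => exact le_top
  | coe nn =>
    cases x with
    | top => exact absurd hxy (by simp)
    | coe m =>
      have hmn : m ≤ nn := by exact_mod_cast hxy
      rw [evalG_coe, evalG_coe]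
      exact ENNReal.ofReal_le_ofReal
        (hG (Set.mem_Ici.2 (Nat.cast_nonneg m)) (Set.mem_Ici.2 (Nat.cast_nonneg nn))
          (by exact_mod_cast hmn))

section Meas
variable {Ω : Type*} [MeasurableSpace Ω] {X : ℕ → Ω → ℝ}

lemma aux_meas_partialSum (hX : ∀ m, Measurable (X m)) (m : ℕ) :
    Measurable (partialSum X m) := by
  unfold partialSum
  exact Finset.measurable_sum _ fun i _ => hX i

lemma aux_measurableSet_le (hX : ∀ m, Measurable (X m)) (a : ℝ) (n : ℕ) :
    MeasurableSet {ω | (n : ℕ∞) ≤ lastDev X a ω} := by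
  rcases Nat.eq_zero_or_pos n with rfl | hn
  · have : {ω | ((0 : ℕ) : ℕ∞) ≤ lastDev X a ω} = Set.univ := by
      ext ω; simp
    rw [this]; exact MeasurableSet.univ
  · have : {ω | (n : ℕ∞) ≤ lastDev X a ω}
        = ⋃ m, {ω | n ≤ m ∧ a ≤ |partialSum X m ω / m|} := by
      ext ω
      simp only [Set.mem_setOf_eq, Set.mem_iUnion, aux_le_lastDev X a ω hn]
    rw [this]
    refine MeasurableSet.iUnion fun m => ?_
    by_cases h : n ≤ m
    · simp only [h, true_and]
      exact measurableSet_le measurable_const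
        (((aux_meas_partialSum hX m).div_const _).abs)
    · have : {ω | n ≤ m ∧ a ≤ |partialSum X m ω / m|} = ∅ := by
        ext ω; simp [h]
      rw [this]; exact MeasurableSet.empty

lemma aux_measurableSet_eq (hX : ∀ m, Measurable (X m)) (a : ℝ) (j : ℕ∞) :
    MeasurableSet {ω | lastDev X a ω = j} := by
  cases j with
  | top =>
    have : {ω | lastDev X a ω = ⊤} = ⋂ k : ℕ, {ω | (k : ℕ∞) ≤ lastDev X a ω} := by
      ext ω; simp [enat_top_iff]
    rw [this]
    exact MeasurableSet.iInter fun k => aux_measurableSet_le hX a k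
  | coe k =>
    have : {ω | lastDev X a ω = (k : ℕ∞)}
        = {ω | (k : ℕ∞) ≤ lastDev X a ω} \ {ω | (((k+1:ℕ)) : ℕ∞) ≤ lastDev X a ω} := by
      ext ω; simp [enat_eq_iff, Set.mem_diff]
    rw [this]
    exact (aux_measurableSet_le hX a k).diff (aux_measurableSet_le hX a (k+1))

lemma aux_measurable_lastDev (hX : ∀ m, Measurable (X m)) (a : ℝ) :
    Measurable (fun ω => lastDev X a ω) := by
  refine measurable_to_countable' fun j => ?_
  have : (fun ω => lastDev X a ω) ⁻¹' {j} = {ω | lastDev X a ω = j} := by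
    ext ω; simp
  rw [this]; exact aux_measurableSet_eq hX a j

end Meas

lemma aux_lintegral_evalG {Ω : Type*} [MeasurableSpace Ω] (μ : Measure Ω) (G : ℝ → ℝ)
    (f : Ω → ℕ∞) (hf : ∀ j : ℕ∞, MeasurableSet {ω | f ω = j}) :
    ∫⁻ ω, evalG G (f ω) ∂μ = ∑' j : ℕ∞, evalG G j * μ {ω | f ω = j} := by
  have h1 : ∀ ω, evalG G (f ω)
      = ∑' j : ℕ∞, Set.indicator {ω' | f ω' = j} (fun _ => evalG G j) ω := by
    intro ω
    rw [tsum_eq_single (f ω)]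
    · rw [Set.indicator_of_mem (by simp : ω ∈ {ω' | f ω' = f ω})]
    · intro j hj
      exact Set.indicator_of_notMem (fun h => hj ((Set.mem_setOf_eq ▸ h).symm)) _
  calc ∫⁻ ω, evalG G (f ω) ∂μ
      = ∫⁻ ω, ∑' j : ℕ∞, Set.indicator {ω' | f ω' = j} (fun _ => evalG G j) ω ∂μ :=
        lintegral_congr h1
    _ = ∑' j : ℕ∞, ∫⁻ ω, Set.indicator {ω' | f ω' = j} (fun _ => evalG G j) ω ∂μ :=
        lintegral_tsum fun j => (measurable_const.indicator (hf j)).aemeasurable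
    _ = ∑' j : ℕ∞, evalG G j * μ {ω | f ω = j} :=
        tsum_congr fun j => lintegral_indicator_const (hf j) _

lemma aux_map_pi {Ω : Type*} [MeasurableSpace Ω] (μ : Measure Ω) [IsProbabilityMeasure μ]
    (X : Ω → ℝ) (Z : ℕ × Bool → Ω → ℝ) (hX : Measurable X) (hZ : ∀ p, Measurable (Z p))
    (hindep : iIndepFun Z μ)
    (hident : ∀ p, IdentDistrib (Z p) X μ μ) (b : Bool) (N : ℕ) :
    μ.map (fun ω (i : Fin N) => Z ((i : ℕ), b) ω)
      = Measure.pi (fun _ : Fin N => μ.map X) := by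
  have hPX : IsProbabilityMeasure (μ.map X) := Measure.isProbabilityMeasure_map hX.aemeasurable
  have hφ : Measurable (fun ω (i : Fin N) => Z ((i : ℕ), b) ω) :=
    measurable_pi_lambda _ fun i => hZ _
  refine (Measure.pi_eq fun s hs => ?_).symm
  rw [Measure.map_apply hφ (MeasurableSet.univ_pi hs)]
  set sets : ℕ × Bool → Set ℝ := fun p => if h : p.1 < N then s ⟨p.1, h⟩ else Set.univ with hsets
  set S : Finset (ℕ × Bool) := Finset.univ.image (fun i : Fin N => ((i : ℕ), b)) with hS
  have hmeas : ∀ p ∈ S, MeasurableSet (sets p) := by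
    intro p _
    rw [hsets]
    dsimp only
    split
    · exact hs _
    · exact MeasurableSet.univ
  have hpre : (fun ω (i : Fin N) => Z ((i : ℕ), b) ω) ⁻¹' Set.pi Set.univ s
      = ⋂ p ∈ S, Z p ⁻¹' sets p := by
    ext ω
    simp only [Set.mem_preimage, Set.mem_pi, Set.mem_univ, true_implies, Set.mem_iInter,
      hS, Finset.mem_image, Finset.mem_univ, true_and]
    constructor
    · rintro h p ⟨i, rfl⟩
      simp only [hsets, Set.mem_preimage]
      rw [dif_pos i.isLt]
      exact h i
    · intro h i
      have := h ((i : ℕ), b) ⟨i, rfl⟩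
      simp only [hsets, Set.mem_preimage] at this
      rw [dif_pos i.isLt] at this
      exact this
  rw [hpre, hindep.measure_inter_preimage_eq_mul S hmeas, hS,
    Finset.prod_image (fun i _ j _ h => Fin.val_injective (congrArg Prod.fst h))]
  refine Finset.prod_congr rfl fun i _ => ?_
  have h1 : sets ((i : ℕ), b) = s i := by
    simp only [hsets]
    rw [dif_pos i.isLt]
  rw [h1, ← Measure.map_apply (hZ _) (hs i), (hident ((i : ℕ), b)).map_eq]

lemma aux_measure_le_eq {Ω : Type*} [MeasurableSpace Ω] (μ : Measure Ω) [IsProbabilityMeasure μ]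
    (X : Ω → ℝ) (Z : ℕ × Bool → Ω → ℝ) (hX : Measurable X) (hZ : ∀ p, Measurable (Z p))
    (hindep : iIndepFun Z μ)
    (hident : ∀ p, IdentDistrib (Z p) X μ μ) (a : ℝ) (n : ℕ) (hn : 1 ≤ n) (b b' : Bool) :
    μ {ω | (n : ℕ∞) ≤ lastDev (fun m => Z (m, b)) a ω}
      = μ {ω | (n : ℕ∞) ≤ lastDev (fun m => Z (m, b')) a ω} := by
  classical
  set D : (N : ℕ) → Set (Fin N → ℝ) := fun N =>
    {x : Fin N → ℝ | ∃ m, n ≤ m ∧ m ≤ N ∧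
      a ≤ |(∑ i ∈ Finset.range m, if h : i < N then x ⟨i, h⟩ else 0) / (m : ℝ)|} with hD
  have hDmeas : ∀ N, MeasurableSet (D N) := by
    intro N
    have : D N = ⋃ m, {x : Fin N → ℝ | n ≤ m ∧ m ≤ N ∧
        a ≤ |(∑ i ∈ Finset.range m, if h : i < N then x ⟨i, h⟩ else 0) / (m : ℝ)|} := by
      ext x; simp only [hD, Set.mem_setOf_eq, Set.mem_iUnion]
    rw [this]
    refine MeasurableSet.iUnion fun m => ?_
    by_cases h : n ≤ m ∧ m ≤ N
    · simp only [h.1, h.2, true_and]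
      refine measurableSet_le measurable_const (Measurable.abs (Measurable.div_const ?_ _))
      refine Finset.measurable_sum _ fun i _ => ?_
      by_cases hi : i < N
      · simp only [dif_pos hi]; exact measurable_pi_apply _
      · simp only [dif_neg hi]; exact measurable_const
    · have : {x : Fin N → ℝ | n ≤ m ∧ m ≤ N ∧
          a ≤ |(∑ i ∈ Finset.range m, if h : i < N then x ⟨i, h⟩ else 0) / (m : ℝ)|} = ∅ := by
        ext x
        simp only [Set.mem_setOf_eq, Set.mem_empty_iff_false, iff_false]
        rintro ⟨h1, h2, _⟩; exact h ⟨h1, h2⟩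
      rw [this]; exact MeasurableSet.empty
  have key : ∀ c : Bool, μ {ω | (n : ℕ∞) ≤ lastDev (fun m => Z (m, c)) a ω}
      = ⨆ N, Measure.pi (fun _ : Fin N => μ.map X) (D N) := by
    intro c
    have hpre : ∀ N : ℕ, (fun ω (i : Fin N) => Z ((i : ℕ), c) ω) ⁻¹' D N
        = {ω | ∃ m, n ≤ m ∧ m ≤ N ∧ a ≤ |partialSum (fun m => Z (m, c)) m ω / m|} := by
      intro N
      ext ω
      have hsum : ∀ m, m ≤ N →
          (∑ i ∈ Finset.range m, if h : i < N then Z ((i : ℕ), c) ω else 0)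
            = partialSum (fun m => Z (m, c)) m ω := fun m hm =>
        Finset.sum_congr rfl fun i hi =>
          dif_pos (lt_of_lt_of_le (Finset.mem_range.1 hi) hm)
      simp only [Set.mem_preimage, hD, Set.mem_setOf_eq]
      constructor
      · rintro ⟨m, h1, h2, h3⟩
        exact ⟨m, h1, h2, by rwa [hsum m h2] at h3⟩
      · rintro ⟨m, h1, h2, h3⟩
        exact ⟨m, h1, h2, by rwa [hsum m h2]⟩
    have hset : {ω | (n : ℕ∞) ≤ lastDev (fun m => Z (m, c)) a ω}
        = ⋃ N : ℕ, (fun ω (i : Fin N) => Z ((i : ℕ), c) ω) ⁻¹' D N := by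
      ext ω
      simp only [Set.mem_setOf_eq, Set.mem_iUnion, aux_le_lastDev _ a ω hn, hpre,
        Set.mem_setOf_eq]
      constructor
      · rintro ⟨m, h1, h2⟩; exact ⟨m, m, h1, le_rfl, h2⟩
      · rintro ⟨N, m, h1, h2, h3⟩; exact ⟨m, h1, h3⟩
    have hmono : Monotone (fun N : ℕ => (fun ω (i : Fin N) => Z ((i : ℕ), c) ω) ⁻¹' D N) := by
      intro N M hNM ω hω
      have hω' : ω ∈ (fun ω (i : Fin N) => Z ((i : ℕ), c) ω) ⁻¹' D N := hω
      show ω ∈ (fun ω (i : Fin M) => Z ((i : ℕ), c) ω) ⁻¹' D M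
      rw [hpre N] at hω'
      rw [hpre M]
      obtain ⟨m, h1, h2, h3⟩ := hω'
      exact ⟨m, h1, le_trans h2 hNM, h3⟩
    rw [hset, hmono.measure_iUnion]
    refine iSup_congr fun N => ?_
    have hφ : Measurable (fun ω (i : Fin N) => Z ((i : ℕ), c) ω) :=
      measurable_pi_lambda _ fun i => hZ _
    rw [← Measure.map_apply hφ (hDmeas N),
      aux_map_pi μ X Z hX hZ hindep hident c N]
  rw [key b, key b']

/-- `Z (n, false)` plays the role of `X_n` and `Z (n, true)` that of `X'_n`, an independent
copy of the sequence; `X*_n := X_n − X'_n`.  `L_a`, `L'_a`, `L*_a` are the last deviation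
times of the corresponding Cesàro means. -/
theorem stmt18 {Ω : Type*} [MeasurableSpace Ω] (μ : Measure Ω) [IsProbabilityMeasure μ]
    (X : Ω → ℝ) (Z : ℕ × Bool → Ω → ℝ)
    (hX : Measurable X) (hZ : ∀ p, Measurable (Z p))
    (hindep : iIndepFun Z μ)
    (hident : ∀ p, IdentDistrib (Z p) X μ μ) :
    ∀ a > (0 : ℝ), ∀ n : ℕ, 1 ≤ n →
      {ω | (n : ℕ∞) ≤ lastDev (fun m ω' => Z (m, false) ω' - Z (m, true) ω') (2 * a) ω} ⊆
        {ω | (n : ℕ∞) ≤ lastDev (fun m => Z (m, false)) a ω} ∪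
          {ω | (n : ℕ∞) ≤ lastDev (fun m => Z (m, true)) a ω} ∧
      μ {ω | (n : ℕ∞) ≤ lastDev (fun m ω' => Z (m, false) ω' - Z (m, true) ω') (2 * a) ω} ≤
        2 * μ {ω | (n : ℕ∞) ≤ lastDev (fun m => Z (m, false)) a ω} ∧
      ∀ G : ℝ → ℝ, (∀ t ≥ 0, 0 ≤ G t) → MonotoneOn G (Set.Ici 0) →
        ∫⁻ ω, evalG G (lastDev (fun m ω' => Z (m, false) ω' - Z (m, true) ω') (2 * a) ω) ∂μ ≤
          2 * ∫⁻ ω, evalG G (lastDev (fun m => Z (m, false)) a ω) ∂μ := by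
  intro a ha n hn
  have hsplit : ∀ ω (m : ℕ),
      2 * a ≤ |partialSum (fun m ω' => Z (m, false) ω' - Z (m, true) ω') m ω / m| →
      a ≤ |partialSum (fun m => Z (m, false)) m ω / m|
        ∨ a ≤ |partialSum (fun m => Z (m, true)) m ω / m| := by
    intro ω m h
    have hps : partialSum (fun m ω' => Z (m, false) ω' - Z (m, true) ω') m ω
        = partialSum (fun m => Z (m, false)) m ω - partialSum (fun m => Z (m, true)) m ω := by
      simp [partialSum, Finset.sum_sub_distrib]
    rw [hps, sub_div] at h
    by_contra hc
    push_neg at hc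
    have habs := abs_sub (partialSum (fun m => Z (m, false)) m ω / m)
      (partialSum (fun m => Z (m, true)) m ω / m)
    have h1 := hc.1
    have h2 := hc.2
    linarith
  have hsub : {ω | (n : ℕ∞) ≤ lastDev (fun m ω' => Z (m, false) ω' - Z (m, true) ω') (2 * a) ω} ⊆
      {ω | (n : ℕ∞) ≤ lastDev (fun m => Z (m, false)) a ω} ∪
        {ω | (n : ℕ∞) ≤ lastDev (fun m => Z (m, true)) a ω} := by
    intro ω hω
    obtain ⟨m, hm1, hm2⟩ := (aux_le_lastDev _ _ _ hn).1 hω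
    rcases hsplit ω m hm2 with h | h
    · exact Or.inl ((aux_le_lastDev _ _ _ hn).2 ⟨m, hm1, h⟩)
    · exact Or.inr ((aux_le_lastDev _ _ _ hn).2 ⟨m, hm1, h⟩)
  have hAeq0 : ∀ k : ℕ, μ {ω | (k : ℕ∞) ≤ lastDev (fun m => Z (m, true)) a ω}
      = μ {ω | (k : ℕ∞) ≤ lastDev (fun m => Z (m, false)) a ω} := by
    intro k
    rcases Nat.eq_zero_or_pos k with rfl | hk
    · have h1 : {ω | ((0 : ℕ) : ℕ∞) ≤ lastDev (fun m => Z (m, true)) a ω} = Set.univ := by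
        ext ω; simp
      have h2 : {ω | ((0 : ℕ) : ℕ∞) ≤ lastDev (fun m => Z (m, false)) a ω} = Set.univ := by
        ext ω; simp
      rw [h1, h2]
    · exact aux_measure_le_eq μ X Z hX hZ hindep hident a k hk true false
  refine ⟨hsub, ?_, ?_⟩
  · calc μ {ω | (n : ℕ∞) ≤ lastDev (fun m ω' => Z (m, false) ω' - Z (m, true) ω') (2 * a) ω}
        ≤ μ ({ω | (n : ℕ∞) ≤ lastDev (fun m => Z (m, false)) a ω} ∪
            {ω | (n : ℕ∞) ≤ lastDev (fun m => Z (m, true)) a ω}) := measure_mono hsub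
      _ ≤ μ {ω | (n : ℕ∞) ≤ lastDev (fun m => Z (m, false)) a ω}
            + μ {ω | (n : ℕ∞) ≤ lastDev (fun m => Z (m, true)) a ω} := measure_union_le _ _
      _ = μ {ω | (n : ℕ∞) ≤ lastDev (fun m => Z (m, false)) a ω}
            + μ {ω | (n : ℕ∞) ≤ lastDev (fun m => Z (m, false)) a ω} := by rw [hAeq0 n]
      _ = 2 * μ {ω | (n : ℕ∞) ≤ lastDev (fun m => Z (m, false)) a ω} := (two_mul _).symm
  · intro G hG0 hGmono
    have hEmono := aux_evalG_mono G hGmono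
    have hjeq : ∀ j : ℕ∞, μ {ω | lastDev (fun m => Z (m, true)) a ω = j}
        = μ {ω | lastDev (fun m => Z (m, false)) a ω = j} := by
      intro j
      cases j with
      | top =>
        have hset : ∀ b : Bool, {ω | lastDev (fun m => Z (m, b)) a ω = ⊤}
            = ⋂ k : ℕ, {ω | (k : ℕ∞) ≤ lastDev (fun m => Z (m, b)) a ω} := by
          intro b; ext ω; simp [enat_top_iff]
        have hanti : ∀ b : Bool,
            Antitone (fun k : ℕ => {ω | (k : ℕ∞) ≤ lastDev (fun m => Z (m, b)) a ω}) := by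
          intro b k l hkl ω hω
          exact le_trans (show ((k : ℕ) : ℕ∞) ≤ ((l : ℕ) : ℕ∞) from Nat.cast_le.mpr hkl) hω
        rw [hset true, hset false,
          Antitone.measure_iInter (hanti true)
            (fun k => (aux_measurableSet_le (fun m => hZ (m, true)) a k).nullMeasurableSet)
            ⟨0, measure_ne_top μ _⟩,
          Antitone.measure_iInter (hanti false)
            (fun k => (aux_measurableSet_le (fun m => hZ (m, false)) a k).nullMeasurableSet)
            ⟨0, measure_ne_top μ _⟩]
        exact iInf_congr fun k => hAeq0 k
      | coe k =>
        have hset : ∀ b : Bool, {ω | lastDev (fun m => Z (m, b)) a ω = (k : ℕ∞)}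
            = {ω | (k : ℕ∞) ≤ lastDev (fun m => Z (m, b)) a ω}
              \ {ω | (((k + 1 : ℕ)) : ℕ∞) ≤ lastDev (fun m => Z (m, b)) a ω} := by
          intro b; ext ω; simp [enat_eq_iff, Set.mem_diff]
        have hss : ∀ b : Bool,
            {ω | (((k + 1 : ℕ)) : ℕ∞) ≤ lastDev (fun m => Z (m, b)) a ω}
              ⊆ {ω | (k : ℕ∞) ≤ lastDev (fun m => Z (m, b)) a ω} := by
          intro b ω hω
          exact le_trans
            (show ((k : ℕ) : ℕ∞) ≤ (((k + 1 : ℕ)) : ℕ∞) from Nat.cast_le.mpr (Nat.le_succ k)) hω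
        rw [hset true, hset false,
          measure_diff (hss true)
            (aux_measurableSet_le (fun m => hZ (m, true)) a (k + 1)).nullMeasurableSet
            (measure_ne_top μ _),
          measure_diff (hss false)
            (aux_measurableSet_le (fun m => hZ (m, false)) a (k + 1)).nullMeasurableSet
            (measure_ne_top μ _),
          hAeq0 k, hAeq0 (k + 1)]
    have hpt : ∀ ω, evalG G (lastDev (fun m ω' => Z (m, false) ω' - Z (m, true) ω') (2 * a) ω)
        ≤ evalG G (lastDev (fun m => Z (m, false)) a ω)
          + evalG G (lastDev (fun m => Z (m, true)) a ω) := by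
      intro ω
      have hle : lastDev (fun m ω' => Z (m, false) ω' - Z (m, true) ω') (2 * a) ω
          ≤ lastDev (fun m => Z (m, false)) a ω ⊔ lastDev (fun m => Z (m, true)) a ω := by
        refine iSup₂_le fun m hm => ?_
        obtain ⟨hm1, hm2⟩ := hm
        rcases hsplit ω m hm2 with h | h
        · exact le_sup_of_le_left
            ((aux_le_lastDev (fun m => Z (m, false)) a ω hm1).2 ⟨m, le_rfl, h⟩)
        · exact le_sup_of_le_right
            ((aux_le_lastDev (fun m => Z (m, true)) a ω hm1).2 ⟨m, le_rfl, h⟩)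
      have hEle := hEmono hle
      rcases le_total (lastDev (fun m => Z (m, false)) a ω)
          (lastDev (fun m => Z (m, true)) a ω) with h | h
      · rw [sup_eq_right.2 h] at hEle
        exact hEle.trans le_add_self
      · rw [sup_eq_left.2 h] at hEle
        exact hEle.trans le_self_add
    have hmeasf : Measurable (fun ω => evalG G (lastDev (fun m => Z (m, false)) a ω)) :=
      (measurable_of_countable (evalG G)).comp
        (aux_measurable_lastDev (fun m => hZ (m, false)) a)
    have hint_eq : ∫⁻ ω, evalG G (lastDev (fun m => Z (m, true)) a ω) ∂μ
        = ∫⁻ ω, evalG G (lastDev (fun m => Z (m, false)) a ω) ∂μ := by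
      rw [aux_lintegral_evalG μ G _ (fun j => aux_measurableSet_eq (fun m => hZ (m, true)) a j),
        aux_lintegral_evalG μ G _ (fun j => aux_measurableSet_eq (fun m => hZ (m, false)) a j)]
      exact tsum_congr fun j => by rw [hjeq j]
    calc ∫⁻ ω, evalG G (lastDev (fun m ω' => Z (m, false) ω' - Z (m, true) ω') (2 * a) ω) ∂μ
        ≤ ∫⁻ ω, (evalG G (lastDev (fun m => Z (m, false)) a ω)
            + evalG G (lastDev (fun m => Z (m, true)) a ω)) ∂μ := lintegral_mono hpt
      _ = ∫⁻ ω, evalG G (lastDev (fun m => Z (m, false)) a ω) ∂μ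
            + ∫⁻ ω, evalG G (lastDev (fun m => Z (m, true)) a ω) ∂μ :=
          lintegral_add_left hmeasf _
      _ = ∫⁻ ω, evalG G (lastDev (fun m => Z (m, false)) a ω) ∂μ
            + ∫⁻ ω, evalG G (lastDev (fun m => Z (m, false)) a ω) ∂μ := by rw [hint_eq]
      _ = 2 * ∫⁻ ω, evalG G (lastDev (fun m => Z (m, false)) a ω) ∂μ := (two_mul _).symm
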